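/- Let K be a number field with [K : ℚ] = 2 and let B be a central division algebra over ℚ with dim_ℚ B = 4. If there exists a ℚ-algebra embedding of K into the matrix algebra Mat₃(B) of 3×3 matrices over B, then there exists a ℚ-algebra embedding of K into B. -/

import Mathlib

open Module

lemma sqrt_of_matrix {B : Type} [DivisionRing B] [Algebra ℚ B] (d : ℚ)
    (M : Matrix (Fin 3) (Fin 3) B)
    (hM : M * M = algebraMap ℚ (Matrix (Fin 3) (Fin 3) B) d) :
    ∃ a : B, a * a = algebraMap ℚ B d := by
  by_contra hcon
  push_neg at hcon
  set c : B := algebraMap ℚ B d with hc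
  let φ : (Fin 3 → B) →ₗ[B] (Fin 3 → B) :=
    { toFun := fun v => Matrix.vecMul v M
      map_add' := fun v w => by simp [Matrix.add_vecMul]
      map_smul' := fun b v => by
        funext j
        simp only [Matrix.vecMul, dotProduct, RingHom.id_apply, Pi.smul_apply,
          smul_eq_mul, Finset.mul_sum, mul_assoc] }
  have hφapp : ∀ v, φ v = Matrix.vecMul v M := fun _ => rfl
  have hφφ : ∀ v, φ (φ v) = c • v := by
    intro v
    rw [hφapp, hφapp, Matrix.vecMul_vecMul, hM]
    funext j
    simp only [Matrix.vecMul, dotProduct, Matrix.algebraMap_matrix_apply, Pi.smul_apply,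
      smul_eq_mul]
    rw [Finset.sum_eq_single j]
    · rw [if_pos rfl, ← Algebra.commutes d (v j)]
    · intro i _ hij; rw [if_neg hij, mul_zero]
    · intro hj; exact absurd (Finset.mem_univ j) hj
  have hind : ∀ v : Fin 3 → B, v ≠ 0 → LinearIndependent B ![v, φ v] := by
    intro v hv
    rw [LinearIndependent.pair_iff]
    intro s t hst
    rcases eq_or_ne t 0 with ht | ht
    · subst ht
      simp only [zero_smul, add_zero] at hst
      exact ⟨(smul_eq_zero.mp hst).resolve_right hv, rfl⟩
    · exfalso
      have h1 : t • φ v = (-s) • v := by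
        rw [neg_smul, eq_neg_iff_add_eq_zero, add_comm]; exact hst
      set b := t⁻¹ * -s with hbdef
      have hb : φ v = b • v := by
        calc φ v = (t⁻¹ * t) • φ v := by rw [inv_mul_cancel₀ ht, one_smul]
          _ = t⁻¹ • (t • φ v) := by rw [smul_smul]
          _ = t⁻¹ • ((-s) • v) := by rw [h1]
          _ = b • v := by rw [smul_smul]
      have h1 : φ (φ v) = (b * b) • v := by
        rw [hb, map_smul, hb, smul_smul]
      rw [hφφ v] at h1
      have h2 : (b * b - c) • v = 0 := by rw [sub_smul, h1, sub_self]
      have h3 : b * b - c = 0 := by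
        rcases smul_eq_zero.mp h2 with h | h
        · exact h
        · exact absurd h hv
      exact hcon b (by rwa [sub_eq_zero] at h3)
  -- pick a nonzero vector
  set v : Fin 3 → B := fun _ => 1 with hvdef
  have hv : v ≠ 0 := by
    intro h
    have := congrFun h 0
    simp [hvdef] at this
  set W : Submodule B (Fin 3 → B) := Submodule.span B (Set.range ![v, φ v]) with hW
  have hrange : Set.range ![v, φ v] = {v, φ v} := by
    ext x
    simp [Matrix.range_cons, Matrix.range_empty, or_comm]
  have hvW : v ∈ W := Submodule.subset_span (by rw [hrange]; left; rfl)
  have hφvW : φ v ∈ W := Submodule.subset_span (by rw [hrange]; right; rfl)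
  have hWle : W ≤ W.comap φ := by
    rw [hW, Submodule.span_le]
    intro x hx
    rw [hrange] at hx
    rcases hx with rfl | rfl
    · exact Submodule.mem_comap.mpr hφvW
    · refine Submodule.mem_comap.mpr ?_
      rw [hφφ]
      exact Submodule.smul_mem _ c hvW
  have hfin : finrank B (Fin 3 → B) = 3 := by simp [Module.finrank_pi]
  have hWrank : finrank B W = 2 := by
    rw [hW, finrank_span_eq_card (hind v hv)]
    simp
  have hQ : finrank B ((Fin 3 → B) ⧸ W) = 1 := by
    have := Submodule.finrank_quotient_add_finrank W
    omega
  set ψ : ((Fin 3 → B) ⧸ W) →ₗ[B] ((Fin 3 → B) ⧸ W) := Submodule.mapQ W W φ hWle with hψ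
  haveI : Nontrivial ((Fin 3 → B) ⧸ W) :=
    Module.nontrivial_of_finrank_pos (R := B) (by rw [hQ]; norm_num)
  obtain ⟨q, hq⟩ := exists_ne (0 : (Fin 3 → B) ⧸ W)
  have hspan : Submodule.span B {q} = ⊤ := (finrank_eq_one_iff_of_nonzero q hq).mp hQ
  have hmem : ψ q ∈ Submodule.span B {q} := hspan ▸ Submodule.mem_top
  obtain ⟨a, ha⟩ := Submodule.mem_span_singleton.mp hmem
  have hψψ : ψ (ψ q) = c • q := by
    obtain ⟨x, rfl⟩ := Submodule.Quotient.mk_surjective W q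
    rw [hψ, Submodule.mapQ_apply, Submodule.mapQ_apply, hφφ]
    rfl
  have h1 : (a * a) • q = c • q := by
    rw [← hψψ, ← ha, map_smul, ← ha, smul_smul]
  have h2 : (a * a - c) • q = 0 := by rw [sub_smul, h1, sub_self]
  rcases smul_eq_zero.mp h2 with h | h
  · exact hcon a (by rwa [sub_eq_zero] at h)
  · exact hq h

lemma deg2_of_not_mem {K : Type} [Field K] [NumberField K]
    (hK : Module.finrank ℚ K = 2) (γ : K) (hγ : γ ∉ (algebraMap ℚ K).range) :
    (minpoly ℚ γ).natDegree = 2 := by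
  have hint : IsIntegral ℚ γ := IsIntegral.of_finite ℚ γ
  have h1 : 2 ≤ (minpoly ℚ γ).natDegree := (minpoly.two_le_natDegree_iff hint).mpr hγ
  have h2 : (minpoly ℚ γ).natDegree ≤ 2 := hK ▸ minpoly.natDegree_le γ
  omega


lemma embed_of_sqrt {K B : Type} [Field K] [NumberField K] [DivisionRing B] [Algebra ℚ B]
    (hK : Module.finrank ℚ K = 2) (α : K) (hαint : IsIntegral ℚ α)
    (hdegα : (minpoly ℚ α).natDegree = 2) {d : ℚ}
    (hpq : minpoly ℚ α = Polynomial.X ^ 2 - Polynomial.C d)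
    (a : B) (ha : a * a = algebraMap ℚ B d) :
    ∃ g : K →ₐ[ℚ] B, Function.Injective g := by
  letI : CommRing (Algebra.adjoin ℚ ({a} : Set B)) :=
    Algebra.adjoinCommRingOfComm ℚ (by
      rintro x hx y hy
      rw [Set.mem_singleton_iff] at hx hy
      rw [hx, hy])
  let a' : Algebra.adjoin ℚ ({a} : Set B) := ⟨a, Algebra.self_mem_adjoin_singleton ℚ a⟩
  have ha' : a' * a' = algebraMap ℚ (Algebra.adjoin ℚ ({a} : Set B)) d := by
    have h1 : ((a' * a' : Algebra.adjoin ℚ ({a} : Set B)) : B) = a * a := rfl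
    have h2 : ((algebraMap ℚ (Algebra.adjoin ℚ ({a} : Set B)) d :
        Algebra.adjoin ℚ ({a} : Set B)) : B) = algebraMap ℚ B d := by
      rw [Subalgebra.coe_algebraMap]
    exact Subtype.ext (h1.trans (ha.trans h2.symm))
  have hroot : Polynomial.aeval a' (minpoly ℚ α) = 0 := by
    rw [hpq, map_sub, map_pow, Polynomial.aeval_X, Polynomial.aeval_C, pow_two, ha', sub_self]
  haveI : Fact (Irreducible (minpoly ℚ α)) := ⟨minpoly.irreducible hαint⟩
  have hp0 : minpoly ℚ α ≠ 0 := minpoly.ne_zero hαint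
  let ψ : AdjoinRoot (minpoly ℚ α) →ₐ[ℚ] K :=
    AdjoinRoot.liftAlgHom (minpoly ℚ α) (Algebra.ofId ℚ K) α (minpoly.aeval ℚ α)
  haveI : Module.Finite ℚ (AdjoinRoot (minpoly ℚ α)) := (AdjoinRoot.powerBasis hp0).finite
  have hfr : Module.finrank ℚ (AdjoinRoot (minpoly ℚ α)) = Module.finrank ℚ K := by
    rw [(AdjoinRoot.powerBasis hp0).finrank, hK]
    show (minpoly ℚ α).natDegree = 2
    exact hdegα
  have hinj : Function.Injective ψ := ψ.toRingHom.injective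
  have hsurj : Function.Surjective ψ :=
    (LinearMap.injective_iff_surjective_of_finrank_eq_finrank (f := ψ.toLinearMap) hfr).mp hinj
  let eqv := AlgEquiv.ofBijective ψ ⟨hinj, hsurj⟩
  let g : K →ₐ[ℚ] B :=
    (Algebra.adjoin ℚ ({a} : Set B)).val.comp
      ((AdjoinRoot.liftAlgHom (minpoly ℚ α) (Algebra.ofId ℚ _) a' hroot).comp eqv.symm.toAlgHom)
  exact ⟨g, g.toRingHom.injective⟩

/-- Let `K` be a quadratic number field and `B` a central division algebra over `ℚ` with
`dim_ℚ B = 4` (a quaternion division algebra).  If `K` embeds as a `ℚ`-algebra into the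
matrix algebra `Mat₃(B)`, then `K` embeds as a `ℚ`-algebra into `B`. -/
theorem stmt_8 (K : Type) [Field K] [NumberField K]
    (hK : Module.finrank ℚ K = 2)
    (B : Type) [DivisionRing B] [Algebra ℚ B] [Algebra.IsCentral ℚ B]
    [FiniteDimensional ℚ B] (hB : Module.finrank ℚ B = 4)
    (h : ∃ f : K →ₐ[ℚ] Matrix (Fin 3) (Fin 3) B, Function.Injective f) :
    ∃ g : K →ₐ[ℚ] B, Function.Injective g := by
  obtain ⟨f, -⟩ := h
  -- find β not in the image of ℚ
  obtain ⟨β, hβ⟩ : ∃ β : K, β ∉ (algebraMap ℚ K).range := by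
    by_contra hb
    push_neg at hb
    have hbt : (⊥ : Subalgebra ℚ K) = ⊤ := by
      rw [eq_top_iff]
      intro x _
      rw [Algebra.mem_bot]
      obtain ⟨r, hr⟩ := hb x
      exact ⟨r, hr⟩
    have : Module.finrank ℚ K = 1 := Subalgebra.bot_eq_top_iff_finrank_eq_one.mp hbt
    omega
  have hβint : IsIntegral ℚ β := IsIntegral.of_finite ℚ β
  have hdeg : (minpoly ℚ β).natDegree = 2 := deg2_of_not_mem hK β hβ
  set p := minpoly ℚ β with hp
  have haev := minpoly.aeval ℚ β
  rw [Polynomial.aeval_eq_sum_range, ← hp, hdeg] at haev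
  rw [Finset.sum_range_succ, Finset.sum_range_succ, Finset.sum_range_one] at haev
  have hmonic : p.Monic := minpoly.monic hβint
  have hc2 : p.coeff 2 = 1 := by
    have := hmonic.coeff_natDegree
    rwa [hdeg] at this
  rw [hc2, one_smul] at haev
  set b := p.coeff 1 with hbdef
  set c0 := p.coeff 0 with hc0def
  have hββ : β * β = algebraMap ℚ K (-c0) + algebraMap ℚ K (-b) * β := by
    rw [map_neg, map_neg]
    rw [pow_zero, pow_one, pow_two, Algebra.smul_def, Algebra.smul_def] at haev
    linear_combination haev
  set e : K := algebraMap ℚ K (b/2) with hedef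
  set d : ℚ := (b/2)*(b/2) - c0 with hddef
  set α : K := β + e with hαdef
  have hα : α ∉ (algebraMap ℚ K).range := by
    rintro ⟨r, hr⟩
    exact hβ ⟨r - b/2, by rw [map_sub, hr, hαdef, hedef]; ring⟩
  have hbb : algebraMap ℚ K b = e + e := by rw [hedef, ← map_add]; norm_num
  have hα2 : α * α = algebraMap ℚ K d := by
    have hd : algebraMap ℚ K d = e * e - algebraMap ℚ K c0 := by
      rw [hddef, map_sub, map_mul, hedef]
    rw [hd, hαdef]
    have hββ' : β * β = -(algebraMap ℚ K c0) + -(algebraMap ℚ K b) * β := by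
      rw [← map_neg, ← map_neg]; exact hββ
    linear_combination hββ' - β * hbb
  have hαint : IsIntegral ℚ α := IsIntegral.of_finite ℚ α
  have hdegα : (minpoly ℚ α).natDegree = 2 := deg2_of_not_mem hK α hα
  set q : Polynomial ℚ := Polynomial.X ^ 2 - Polynomial.C d with hqdef
  have hq0 : Polynomial.aeval α q = 0 := by
    rw [hqdef, map_sub, map_pow, Polynomial.aeval_X, Polynomial.aeval_C, pow_two, hα2, sub_self]
  have hqmonic : q.Monic := Polynomial.monic_X_pow_sub_C d two_ne_zero
  have hqdeg : q.natDegree = 2 := Polynomial.natDegree_X_pow_sub_C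
  have hpq : minpoly ℚ α = q := by
    obtain ⟨u, hu⟩ := minpoly.dvd ℚ α hq0
    have hune : u ≠ 0 := by
      rintro rfl
      rw [mul_zero] at hu
      exact hqmonic.ne_zero hu
    have hdegu : u.natDegree = 0 := by
      have := Polynomial.natDegree_mul (minpoly.ne_zero hαint) hune
      rw [← hu, hqdeg, hdegα] at this
      omega
    have hu1 : u = 1 := by
      have h := congrArg Polynomial.leadingCoeff hu
      rw [Polynomial.leadingCoeff_mul, (minpoly.monic hαint).leadingCoeff, one_mul,
        hqmonic.leadingCoeff] at h
      rw [Polynomial.eq_C_of_natDegree_eq_zero hdegu]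
      rw [Polynomial.eq_C_of_natDegree_eq_zero hdegu, Polynomial.leadingCoeff_C] at h
      rw [← h, map_one]
    rw [hu, hu1, mul_one]
  -- the matrix image of α
  set M := f α with hMdef
  have hM : M * M = algebraMap ℚ (Matrix (Fin 3) (Fin 3) B) d := by
    rw [hMdef, ← map_mul, hα2, AlgHom.commutes]
  obtain ⟨a, ha⟩ := sqrt_of_matrix d M hM
  exact embed_of_sqrt hK α hαint (deg2_of_not_mem hK α hα) (hpq.trans hqdef) a ha
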